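/- Consider the SPS construction: measurements Y_i = φ_i^T p̊ + W_i, i = 1,...,N, with W_i independent and each symmetric about 0, regressors φ_i ∈ R^{n_p} known. Let A_{j,i}, j=1,...,m-1, i=1,...,N, be i.i.d. random signs independent of the noise. Define Z_0(p̊) = ||Σ_i φ_i W_i||² and Z_j(p̊) = ||Σ_i A_{j,i} φ_i W_i||² for j=1,...,m-1. Then (with uniform random tie-breaking) each Z_j(p̊), j=0,...,m-1, occupies any given rank among the m values with probability 1/m; consequently P(p̊ ∈ Σ_q) = 1 - q/m, where Σ_q is the set of p for which Z_0(p) is not among the q largest of the Z_j(p). -/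

import Mathlib

open MeasureTheory ProbabilityTheory
open scoped ENNReal

/-- A random sign: a ±1-valued random variable taking each value with probability 1/2. -/
def IsRandSign {Ω : Type*} [MeasurableSpace Ω] (P : Measure Ω) (X : Ω → ℝ) : Prop :=
  Measurable X ∧ P {ω | X ω = 1} = 1/2 ∧ P {ω | X ω = -1} = 1/2

/-- The SPS statistics at a parameter `p`: `spsZ … 0` is the squared norm of the
unperturbed sum `Σ_i (Y_i - ⟪φ_i, p⟫) φ_i`, and `spsZ … j.succ` is the squared norm of
the `j`-th sign-perturbed sum `Σ_i A_{j,i} (Y_i - ⟪φ_i, p⟫) φ_i`. Here the paper's `m`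
is `mm + 1` (one unperturbed and `mm` perturbed sums). -/
noncomputable def spsZ {Ω : Type*} {N np mm : ℕ}
    (φ : Fin N → EuclideanSpace ℝ (Fin np)) (Y : Fin N → Ω → ℝ)
    (A : Fin mm → Fin N → Ω → ℝ) (p : EuclideanSpace ℝ (Fin np)) :
    Fin (mm + 1) → Ω → ℝ :=
  fun j => Fin.cases (motive := fun _ => Ω → ℝ)
    (fun ω => ‖∑ i, (Y i ω - (inner ℝ (φ i) p : ℝ)) • φ i‖ ^ 2)
    (fun j' ω => ‖∑ i, (A j' i ω * (Y i ω - (inner ℝ (φ i) p : ℝ))) • φ i‖ ^ 2) j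


section Helpers

variable {Ω : Type*} [MeasurableSpace Ω]

/-- The joint law of a finite independent family is the product of the marginals. -/
lemma sps_bundle_law {ι : Type*} [Fintype ι] (P : Measure Ω) [IsProbabilityMeasure P]
    (f : ι → Ω → ℝ) (hf : ∀ i, Measurable (f i))
    (h : iIndepFun f P) :
    Measure.map (fun ω i => f i ω) P = Measure.pi (fun i => Measure.map (f i) P) := by
  haveI : ∀ i, IsProbabilityMeasure (Measure.map (f i) P) :=
    fun i => Measure.isProbabilityMeasure_map (hf i).aemeasurable
  refine (Measure.pi_eq fun s hs => ?_).symm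
  rw [Measure.map_apply (measurable_pi_lambda _ fun i => hf i) (MeasurableSet.univ_pi hs)]
  have hset : (fun ω i => f i ω) ⁻¹' Set.pi Set.univ s = ⋂ i ∈ Finset.univ, f i ⁻¹' s i := by
    ext ω; simp [Set.mem_pi]
  rw [hset, h.measure_inter_preimage_eq_mul Finset.univ (fun i _ => hs i)]
  exact Finset.prod_congr rfl fun i _ => (Measure.map_apply (hf i) (hs i)).symm

/-- Independence is preserved by injective reindexing. -/
lemma sps_iIndepFun_reindex {ι ι' : Type*} (P : Measure Ω) (g : ι' → ι)
    (hg : Function.Injective g) (f : ι → Ω → ℝ)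
    (h : iIndepFun f P) :
    iIndepFun (fun i' => f (g i')) P := by
  classical
  rw [iIndepFun_iff_measure_inter_preimage_eq_mul] at h ⊢
  intro S' sets' hsets'
  set sets : ι → Set ℝ := fun i =>
    if hex : ∃ i' ∈ S', g i' = i then sets' hex.choose else Set.univ with hsets_def
  have key : ∀ i' ∈ S', sets (g i') = sets' i' := by
    intro i' hi'
    have hex : ∃ j ∈ S', g j = g i' := ⟨i', hi', rfl⟩
    have hch := hex.choose_spec
    have : hex.choose = i' := hg hch.2
    simp only [hsets_def, dif_pos hex, this]
  have h1 := h (S'.image g) (sets := sets) (by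
    intro i hi
    rw [Finset.mem_image] at hi
    obtain ⟨i', hi', rfl⟩ := hi
    rw [key i' hi']
    exact hsets' i' hi')
  have e1 : (⋂ i ∈ S'.image g, f i ⁻¹' sets i) = ⋂ i' ∈ S', f (g i') ⁻¹' sets' i' := by
    ext ω
    simp only [Set.mem_iInter, Finset.mem_image]
    constructor
    · intro hω i' hi'
      have := hω (g i') ⟨i', hi', rfl⟩
      rwa [key i' hi'] at this
    · rintro hω i ⟨i', hi', rfl⟩
      rw [key i' hi']
      exact hω i' hi'
  have e2 : ∏ i ∈ S'.image g, P (f i ⁻¹' sets i) = ∏ i' ∈ S', P (f (g i') ⁻¹' sets' i') := by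
    rw [Finset.prod_image (fun a _ b _ hab => hg hab)]
    exact Finset.prod_congr rfl fun i' hi' => by rw [key i' hi']
  rw [← e1, ← e2, h1]

/-- Mapping a product measure by "permute the coordinates and then apply a
marginal-preserving map in each coordinate" yields the corresponding product measure. -/
lemma sps_pi_map {ι : Type*} [Fintype ι] (ν ν' : ι → Measure ℝ)
    [∀ i, IsProbabilityMeasure (ν i)] [∀ i, IsProbabilityMeasure (ν' i)]
    (σ : Equiv.Perm ι) (g : ι → ℝ → ℝ) (hg : ∀ s, Measurable (g s))
    (h : ∀ s, (ν (σ s)).map (g s) = ν' s) :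
    (Measure.pi ν).map (fun x s => g s (x (σ s))) = Measure.pi ν' := by
  refine (Measure.pi_eq fun t ht => ?_).symm
  have hΨ : Measurable (fun x : ι → ℝ => fun s => g s (x (σ s))) :=
    measurable_pi_lambda _ fun s => (hg s).comp (measurable_pi_apply _)
  rw [Measure.map_apply hΨ (MeasurableSet.univ_pi ht)]
  have hpre : (fun x : ι → ℝ => fun s => g s (x (σ s))) ⁻¹' Set.pi Set.univ t
      = Set.pi Set.univ (fun i => g (σ.symm i) ⁻¹' t (σ.symm i)) := by
    ext x
    simp only [Set.mem_preimage, Set.mem_pi, Set.mem_univ, true_implies]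
    constructor
    · intro hx i
      have := hx (σ.symm i)
      simpa using this
    · intro hx s
      have := hx (σ s)
      simpa using this
  rw [hpre, Measure.pi_pi]
  calc ∏ i, ν i (g (σ.symm i) ⁻¹' t (σ.symm i))
      = ∏ i, ν' (σ.symm i) (t (σ.symm i)) := by
        refine Finset.prod_congr rfl fun i _ => ?_
        have := h (σ.symm i)
        rw [σ.apply_symm_apply] at this
        rw [← this, Measure.map_apply (hg _) (ht _)]
    _ = ∏ s, ν' s (t s) := Equiv.prod_comp σ.symm (fun s => ν' s (t s))

/-- Measurability of level sets of the counting function of a finite family of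
measurable conditions. -/
lemma sps_measurableSet_card_filter {α : Type*} [MeasurableSpace α] {ι : Type*} [Fintype ι]
    (p : ι → α → Prop) [∀ l x, Decidable (p l x)]
    (hp : ∀ l, MeasurableSet {x | p l x}) (r : ℕ) :
    MeasurableSet {x | (Finset.univ.filter fun l => p l x).card = r} := by
  classical
  have : {x | (Finset.univ.filter fun l => p l x).card = r}
      = ⋃ s : Finset ι, ⋃ (_ : s.card = r), ⋂ l : ι, {x | p l x ↔ l ∈ s} := by
    ext x
    simp only [Set.mem_setOf_eq, Set.mem_iUnion, Set.mem_iInter]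
    constructor
    · intro hx
      refine ⟨Finset.univ.filter fun l => p l x, hx, fun l => ?_⟩
      simp
    · rintro ⟨s, hs, hmem⟩
      have : Finset.univ.filter (fun l => p l x) = s := by
        ext l; simpa using hmem l
      rw [this]; exact hs
  rw [this]
  refine MeasurableSet.iUnion fun s => MeasurableSet.iUnion fun _ =>
    MeasurableSet.iInter fun l => ?_
  by_cases hl : l ∈ s
  · simp only [hl, iff_true]
    exact hp l
  · simp only [hl, iff_false]
    exact (hp l).compl

/-- `ncard` of a set-of in a fintype as a filter card. -/
lemma sps_ncard_eq_filter {ι : Type*} [Fintype ι] (p : ι → Prop) [DecidablePred p] :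
    Set.ncard {x | p x} = (Finset.univ.filter p).card := by
  classical
  rw [Set.ncard_eq_toFinset_card']
  congr 1
  ext x
  simp

/-- The rank function of an injective tuple in a linear order hits every value
below `n` exactly once. -/
lemma sps_rank_existsUnique {n : ℕ} {β : Type*} [LinearOrder β] (S : Fin n → β)
    (hS : Function.Injective S) (r : ℕ) (hr : r < n) :
    ∃! j, (Finset.univ.filter fun l => S l < S j).card = r := by
  classical
  set rk : Fin n → ℕ := fun j => (Finset.univ.filter fun l => S l < S j).card with hrk
  have hlt : ∀ j, rk j < n := by
    intro j
    have hsub : (Finset.univ.filter fun l => S l < S j) ⊆ Finset.univ.erase j := by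
      intro l hl
      simp only [Finset.mem_filter] at hl
      exact Finset.mem_erase.mpr ⟨fun h => absurd hl.2 (by rw [h]; exact lt_irrefl _), hl.1⟩
    calc rk j ≤ (Finset.univ.erase j).card := Finset.card_le_card hsub
      _ = n - 1 := by rw [Finset.card_erase_of_mem (Finset.mem_univ j), Finset.card_univ,
          Fintype.card_fin]
      _ < n := by omega
  have hmono : ∀ j j', S j < S j' → rk j < rk j' := by
    intro j j' hlt'
    refine Finset.card_lt_card ?_
    constructor
    · intro l hl
      simp only [Finset.mem_filter] at hl ⊢
      exact ⟨hl.1, hl.2.trans hlt'⟩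
    · intro hsub
      have : j ∈ Finset.univ.filter fun l => S l < S j' := by
        simp [hlt']
      have hj := hsub this
      simp only [Finset.mem_filter] at hj
      exact absurd hj.2 (lt_irrefl _)
  have hinj : Function.Injective rk := by
    intro j j' h
    rcases lt_trichotomy (S j) (S j') with hc | hc | hc
    · exact absurd h (Nat.ne_of_lt (hmono _ _ hc))
    · exact hS hc
    · exact absurd h.symm (Nat.ne_of_lt (hmono _ _ hc))
  have hinj' : Function.Injective (fun j => (⟨rk j, hlt j⟩ : Fin n)) := by
    intro a b hab
    exact hinj (congrArg Fin.val hab)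
  have hsurj := (Finite.injective_iff_surjective).mp hinj'
  obtain ⟨j, hj⟩ := hsurj ⟨r, hr⟩
  refine ⟨j, congrArg Fin.val hj, fun y hy => ?_⟩
  apply hinj
  show (Finset.univ.filter fun l => S l < S y).card = rk j
  rw [hy]
  exact (congrArg Fin.val hj).symm

end Helpers
section SPSDefs

/-- The sign attached to a boolean. -/
def spsSg (b : Bool) : ℝ := if b then 1 else -1

lemma spsSg_mul_self (b : Bool) : spsSg b * spsSg b = 1 := by
  cases b <;> norm_num [spsSg]

lemma spsSg_beq (a b : Bool) : spsSg (a == b) * spsSg b = spsSg a := by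
  cases a <;> cases b <;> norm_num [spsSg]

variable {N np mm : ℕ}

/-- Value-space version of the SPS statistics, with deterministic signs `ε`. -/
noncomputable def spsZv (φ : Fin N → EuclideanSpace ℝ (Fin np)) (ε : Fin mm → Fin N → Bool)
    (x : (Fin N ⊕ Fin (mm + 1)) → ℝ) : Fin (mm + 1) → ℝ :=
  fun l => Fin.cases (motive := fun _ => ℝ)
    (‖∑ i, x (Sum.inl i) • φ i‖ ^ 2)
    (fun k => ‖∑ i, (spsSg (ε k i) * x (Sum.inl i)) • φ i‖ ^ 2) l

/-- Value-space version of the tie-broken SPS statistics. -/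
noncomputable def spsSv (φ : Fin N → EuclideanSpace ℝ (Fin np)) (ε : Fin mm → Fin N → Bool)
    (x : (Fin N ⊕ Fin (mm + 1)) → ℝ) (l : Fin (mm + 1)) : ℝ ×ₗ ℝ :=
  toLex (spsZv φ ε x l, x (Sum.inr l))

/-- Value-space version of the rank-`r` event. -/
def spsR (φ : Fin N → EuclideanSpace ℝ (Fin np)) (ε : Fin mm → Fin N → Bool)
    (j : Fin (mm + 1)) (r : ℕ) : Set ((Fin N ⊕ Fin (mm + 1)) → ℝ) :=
  {x | Set.ncard {l | spsSv φ ε x l < spsSv φ ε x j} = r}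

/-- The sign-table transformation implementing the swap of statistic `0` with
statistic `k+1`. -/
def spsEpsT (ε : Fin mm → Fin N → Bool) (k : Fin mm) : Fin mm → Fin N → Bool :=
  fun l i => if l = k then ε k i else (ε l i == ε k i)

lemma spsEpsT_invol (ε : Fin mm → Fin N → Bool) (k : Fin mm) :
    spsEpsT (spsEpsT ε k) k = ε := by
  funext l i
  by_cases hl : l = k
  · subst hl; simp [spsEpsT]
  · simp only [spsEpsT, if_neg hl, if_pos rfl]
    cases ε l i <;> cases ε k i <;> rfl

/-- The coordinate permutation for the swap of statistic `0` with statistic `k+1`. -/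
def spsPerm (k : Fin mm) : Equiv.Perm (Fin N ⊕ Fin (mm + 1)) :=
  Equiv.sumCongr (Equiv.refl _) (Equiv.swap 0 k.succ)

/-- The coordinatewise maps for the swap of statistic `0` with statistic `k+1`. -/
def spsG (ε : Fin mm → Fin N → Bool) (k : Fin mm) : (Fin N ⊕ Fin (mm + 1)) → ℝ → ℝ :=
  fun s => Sum.elim (fun i v => spsSg (ε k i) * v) (fun _ v => v) s

lemma spsG_measurable (ε : Fin mm → Fin N → Bool) (k : Fin mm) (s : Fin N ⊕ Fin (mm + 1)) :
    Measurable (spsG ε k s) := by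
  cases s with
  | inl i => exact measurable_id.const_mul _
  | inr l => exact measurable_id

lemma spsZv_measurable (φ : Fin N → EuclideanSpace ℝ (Fin np)) (ε : Fin mm → Fin N → Bool)
    (l : Fin (mm + 1)) : Measurable (fun x => spsZv φ ε x l) := by
  induction l using Fin.cases with
  | zero =>
      simp only [spsZv, Fin.cases_zero]
      exact ((Finset.measurable_sum _ fun i _ =>
        (measurable_pi_apply (Sum.inl i)).smul_const (φ i)).norm).pow_const 2
  | succ k =>
      simp only [spsZv, Fin.cases_succ]
      exact ((Finset.measurable_sum _ fun i _ =>
        ((measurable_pi_apply (Sum.inl i)).const_mul _).smul_const (φ i)).norm).pow_const 2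

lemma spsR_measurable (φ : Fin N → EuclideanSpace ℝ (Fin np)) (ε : Fin mm → Fin N → Bool)
    (j : Fin (mm + 1)) (r : ℕ) : MeasurableSet (spsR φ ε j r) := by
  classical
  have h1 : spsR φ ε j r = {x | (Finset.univ.filter
      fun l => spsSv φ ε x l < spsSv φ ε x j).card = r} := by
    ext x
    simp only [spsR, Set.mem_setOf_eq, sps_ncard_eq_filter]
  rw [h1]
  refine sps_measurableSet_card_filter _ (fun l => ?_) r
  have h2 : {x | spsSv φ ε x l < spsSv φ ε x j}
      = {x | spsZv φ ε x l < spsZv φ ε x j}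
        ∪ ({x | spsZv φ ε x l = spsZv φ ε x j} ∩ {x | x (Sum.inr l) < x (Sum.inr j)}) := by
    ext x
    simp only [spsSv, Set.mem_setOf_eq, Set.mem_union, Set.mem_inter_iff, Prod.Lex.lt_iff, ofLex_toLex]
  rw [h2]
  exact MeasurableSet.union
    (measurableSet_lt (spsZv_measurable φ ε l) (spsZv_measurable φ ε j))
    (MeasurableSet.inter
      (measurableSet_eq_fun (spsZv_measurable φ ε l)
        (spsZv_measurable φ ε j))
      (measurableSet_lt (measurable_pi_apply _) (measurable_pi_apply _)))

/-- The key combinatorial identity: the swap transformation carries the rank-`r`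
event for statistic `k+1` (with transformed signs) to the rank-`r` event for
statistic `0` (with original signs). -/
lemma spsR_preimage (φ : Fin N → EuclideanSpace ℝ (Fin np)) (ε : Fin mm → Fin N → Bool)
    (k : Fin mm) (r : ℕ) :
    (fun x (s : Fin N ⊕ Fin (mm + 1)) => spsG ε k s (x (spsPerm k s))) ⁻¹'
        spsR φ (spsEpsT ε k) (Fin.succ k) r
      = spsR φ ε 0 r := by
  classical
  ext x
  set σ : Equiv.Perm (Fin (mm + 1)) := Equiv.swap 0 k.succ with hσ
  set Ψx : (Fin N ⊕ Fin (mm + 1)) → ℝ :=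
    fun s => spsG ε k s (x (spsPerm k s)) with hΨx
  have hΨinl : ∀ i, Ψx (Sum.inl i) = spsSg (ε k i) * x (Sum.inl i) := fun i => rfl
  have hΨinr : ∀ l, Ψx (Sum.inr l) = x (Sum.inr (σ l)) := fun l => rfl
  have hZ : ∀ l, spsZv φ (spsEpsT ε k) Ψx l = spsZv φ ε x (σ l) := by
    intro l
    induction l using Fin.cases with
    | zero =>
        have hσ0 : σ 0 = k.succ := Equiv.swap_apply_left _ _
        simp only [spsZv, Fin.cases_zero, hσ0, Fin.cases_succ]
        rfl
    | succ l' =>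
        by_cases hl : l' = k
        · subst hl
          have hσk : σ l'.succ = 0 := Equiv.swap_apply_right _ _
          simp only [spsZv, Fin.cases_succ, hσk, Fin.cases_zero]
          refine congrArg (· ^ 2) (congrArg norm (Finset.sum_congr rfl fun i _ => ?_))
          rw [hΨinl, spsEpsT, if_pos rfl, ← mul_assoc, spsSg_mul_self, one_mul]
        · have hσl : σ l'.succ = l'.succ :=
            Equiv.swap_apply_of_ne_of_ne (Fin.succ_ne_zero l')
              (fun h => hl (Fin.succ_injective _ h))
          simp only [spsZv, Fin.cases_succ, hσl]
          refine congrArg (· ^ 2) (congrArg norm (Finset.sum_congr rfl fun i _ => ?_))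
          rw [hΨinl, spsEpsT, if_neg hl, ← mul_assoc, spsSg_beq]
  have hS : ∀ l, spsSv φ (spsEpsT ε k) Ψx l = spsSv φ ε x (σ l) := by
    intro l
    simp only [spsSv, hZ, hΨinr]
  have hσk : σ (Fin.succ k) = 0 := Equiv.swap_apply_right _ _
  have hmem : x ∈ (fun x (s : Fin N ⊕ Fin (mm + 1)) => spsG ε k s (x (spsPerm k s))) ⁻¹'
      spsR φ (spsEpsT ε k) (Fin.succ k) r ↔ Ψx ∈ spsR φ (spsEpsT ε k) (Fin.succ k) r :=
    Iff.rfl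
  rw [hmem]
  simp only [spsR, Set.mem_setOf_eq]
  have e : {l | spsSv φ (spsEpsT ε k) Ψx l < spsSv φ (spsEpsT ε k) Ψx (Fin.succ k)}
      = σ.symm '' {l | spsSv φ ε x l < spsSv φ ε x 0} := by
    rw [Equiv.image_eq_preimage_symm, Equiv.symm_symm]
    ext l
    simp only [Set.mem_setOf_eq, Set.mem_preimage, hS, hσk]
  rw [e, Set.ncard_image_of_injective _ σ.symm.injective]

end SPSDefs
lemma spsSg_inj : Function.Injective spsSg := by
  intro a b h
  cases a <;> cases b <;> simp_all [spsSg] <;> norm_num at h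

lemma spsZ_zero {Ω : Type*} {N np mm : ℕ}
    (φ : Fin N → EuclideanSpace ℝ (Fin np)) (Y : Fin N → Ω → ℝ)
    (A : Fin mm → Fin N → Ω → ℝ) (p : EuclideanSpace ℝ (Fin np)) (ω : Ω) :
    spsZ φ Y A p 0 ω = ‖∑ i, (Y i ω - (inner ℝ (φ i) p : ℝ)) • φ i‖ ^ 2 := by
  simp [spsZ]

lemma spsZ_succ {Ω : Type*} {N np mm : ℕ}
    (φ : Fin N → EuclideanSpace ℝ (Fin np)) (Y : Fin N → Ω → ℝ)
    (A : Fin mm → Fin N → Ω → ℝ) (p : EuclideanSpace ℝ (Fin np)) (k : Fin mm) (ω : Ω) :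
    spsZ φ Y A p k.succ ω
      = ‖∑ i, (A k i ω * (Y i ω - (inner ℝ (φ i) p : ℝ))) • φ i‖ ^ 2 := by
  simp [spsZ]

lemma spsZv_zero {N np mm : ℕ} (φ : Fin N → EuclideanSpace ℝ (Fin np))
    (ε : Fin mm → Fin N → Bool) (x : (Fin N ⊕ Fin (mm + 1)) → ℝ) :
    spsZv φ ε x 0 = ‖∑ i, x (Sum.inl i) • φ i‖ ^ 2 := by
  simp [spsZv]

lemma spsZv_succ {N np mm : ℕ} (φ : Fin N → EuclideanSpace ℝ (Fin np))
    (ε : Fin mm → Fin N → Bool) (x : (Fin N ⊕ Fin (mm + 1)) → ℝ) (k : Fin mm) :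
    spsZv φ ε x k.succ = ‖∑ i, (spsSg (ε k i) * x (Sum.inl i)) • φ i‖ ^ 2 := by
  simp [spsZv]

lemma spsSv_eq {N np mm : ℕ} (φ : Fin N → EuclideanSpace ℝ (Fin np))
    (ε : Fin mm → Fin N → Bool) (x : (Fin N ⊕ Fin (mm + 1)) → ℝ) (l : Fin (mm + 1)) :
    spsSv φ ε x l = toLex (spsZv φ ε x l, x (Sum.inr l)) := rfl

/-- Counting identity used for the confidence-set probability. -/
lemma sps_part2_count {n : ℕ} {β : Type*} [LinearOrder β] (S : Fin (n + 1) → β)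
    (hS : Function.Injective S) (q : ℕ) (hq : q ≤ n) :
    (q ≤ Set.ncard {j : Fin n | S 0 < S j.succ} ↔
      ∃ r ∈ Finset.range (n + 1 - q), Set.ncard {l : Fin (n + 1) | S l < S 0} = r) := by
  classical
  rw [sps_ncard_eq_filter, sps_ncard_eq_filter]
  have himg : (Finset.univ.filter fun l : Fin (n + 1) => S l < S 0)
      = (Finset.univ.filter fun j : Fin n => S j.succ < S 0).image Fin.succ := by
    ext l
    simp only [Finset.mem_filter, Finset.mem_univ, true_and, Finset.mem_image]
    constructor
    · intro hl
      have hl0 : l ≠ 0 := fun h => absurd hl (by rw [h]; exact lt_irrefl _)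
      obtain ⟨j, rfl⟩ := Fin.exists_succ_eq.mpr hl0
      exact ⟨j, hl, rfl⟩
    · rintro ⟨j, hj, rfl⟩
      exact hj
  have ha' : (Finset.univ.filter fun l : Fin (n + 1) => S l < S 0).card
      = (Finset.univ.filter fun j : Fin n => S j.succ < S 0).card := by
    rw [himg, Finset.card_image_of_injective _ (Fin.succ_injective n)]
  have hcompl : ∀ j : Fin n, (S 0 < S j.succ) ↔ ¬(S j.succ < S 0) := by
    intro j
    constructor
    · intro h h'
      exact absurd (h.trans h') (lt_irrefl _)
    · intro h
      rcases lt_or_eq_of_le (not_lt.mp h) with h2 | h2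
      · exact h2
      · exact absurd (hS h2.symm) (Fin.succ_ne_zero j)
  have hab : (Finset.univ.filter fun j : Fin n => S j.succ < S 0).card
      + (Finset.univ.filter fun j : Fin n => S 0 < S j.succ).card = n := by
    have he : (Finset.univ.filter fun j : Fin n => S 0 < S j.succ)
        = (Finset.univ.filter fun j : Fin n => ¬(S j.succ < S 0)) := by
      ext j
      simp only [Finset.mem_filter, Finset.mem_univ, true_and]
      exact hcompl j
    rw [he, Finset.card_filter_add_card_filter_not, Finset.card_univ, Fintype.card_fin]
  constructor
  · intro hq'
    exact ⟨_, Finset.mem_range.mpr (by omega), rfl⟩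
  · rintro ⟨r, hr, hra⟩
    have := Finset.mem_range.mp hr
    omega
set_option maxHeartbeats 2000000 in
/-- SPS exactness theorem. Measurements `Y i = ⟪φ i, p̊⟫ + W i` with independent noises
`W i`, each symmetric about 0; `A j i` are i.i.d. random signs and `U j` are i.i.d.
atomless tie-breakers, all jointly independent of the noises. Ordering the statistics
`spsZ` (evaluated at the true parameter `p̊`) with uniform random tie-breaking — realized
lexicographically via the `U j` — each statistic occupies any given rank with probability
`1/m` (`m = mm + 1`), and consequently `P(p̊ ∈ Σ_q) = 1 - q/m`, where `Σ_q` is the set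
of parameters `p` for which `Z 0 (p)` is not among the `q` largest of the `Z j (p)`. -/
theorem sps_exact_confidence {Ω : Type*} [MeasurableSpace Ω] (P : Measure Ω)
    [IsProbabilityMeasure P] (N np mm q : ℕ) (hq : 1 ≤ q) (hqm : q ≤ mm)
    (φ : Fin N → EuclideanSpace ℝ (Fin np)) (p₀ : EuclideanSpace ℝ (Fin np))
    (W Y : Fin N → Ω → ℝ) (A : Fin mm → Fin N → Ω → ℝ) (U : Fin (mm + 1) → Ω → ℝ)
    (hWmeas : ∀ i, Measurable (W i))
    (hWsym : ∀ i, Measure.map (W i) P = Measure.map (fun ω => -W i ω) P)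
    (hA : ∀ j i, IsRandSign P (A j i))
    (hUmeas : ∀ j, Measurable (U j))
    (hUid : ∀ j j', IdentDistrib (U j) (U j') P P)
    (hUcont : ∀ j, ∀ x : ℝ, P {ω | U j ω = x} = 0)
    (hindep : iIndepFun
      (Sum.elim W (Sum.elim (fun p : Fin mm × Fin N => A p.1 p.2) U) :
        Fin N ⊕ ((Fin mm × Fin N) ⊕ Fin (mm + 1)) → Ω → ℝ) P)
    (hY : ∀ i ω, Y i ω = (inner ℝ (φ i) p₀ : ℝ) + W i ω) :
    (∀ j : Fin (mm + 1), ∀ r : ℕ, r < mm + 1 →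
      P {ω | Set.ncard {l : Fin (mm + 1) |
          (toLex (spsZ φ Y A p₀ l ω, U l ω) : ℝ ×ₗ ℝ)
            < toLex (spsZ φ Y A p₀ j ω, U j ω)} = r}
        = ((mm + 1 : ℕ) : ℝ≥0∞)⁻¹) ∧
    P {ω | q ≤ Set.ncard {j : Fin mm |
        (toLex (spsZ φ Y A p₀ 0 ω, U 0 ω) : ℝ ×ₗ ℝ)
          < toLex (spsZ φ Y A p₀ j.succ ω, U j.succ ω)}}
      = 1 - (q : ℝ≥0∞) / ((mm + 1 : ℕ) : ℝ≥0∞) := by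
  classical
  have hbigf_meas : ∀ s, Measurable
      ((Sum.elim W (Sum.elim (fun p : Fin mm × Fin N => A p.1 p.2) U) :
        Fin N ⊕ ((Fin mm × Fin N) ⊕ Fin (mm + 1)) → Ω → ℝ) s) := by
    rintro (i | p | l)
    exacts [hWmeas i, (hA p.1 p.2).1, hUmeas l]
  -- the (W, U) subfamily and its joint law
  set f' : (Fin N ⊕ Fin (mm + 1)) → Ω → ℝ := Sum.elim W U with hf'
  have hf'meas : ∀ s, Measurable (f' s) := by rintro (i | l); exacts [hWmeas i, hUmeas l]
  have hf'indep : iIndepFun f' P := by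
    have hinj : Function.Injective
        (Sum.map id Sum.inr : Fin N ⊕ Fin (mm + 1) → Fin N ⊕ ((Fin mm × Fin N) ⊕ Fin (mm + 1))) := by
      rintro (a | a) (b | b) h <;> simp_all
    have h := sps_iIndepFun_reindex P _ hinj _ hindep
    have he : (fun s => (Sum.elim W (Sum.elim (fun p : Fin mm × Fin N => A p.1 p.2) U) :
        Fin N ⊕ ((Fin mm × Fin N) ⊕ Fin (mm + 1)) → Ω → ℝ) (Sum.map id Sum.inr s)) = f' := by
      funext s; cases s <;> rfl
    rwa [he] at h
  set ν : (Fin N ⊕ Fin (mm + 1)) → Measure ℝ := fun s => Measure.map (f' s) P with hν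
  haveI hνprob : ∀ s, IsProbabilityMeasure (ν s) :=
    fun s => Measure.isProbabilityMeasure_map (hf'meas s).aemeasurable
  set μ : Measure ((Fin N ⊕ Fin (mm + 1)) → ℝ) := Measure.pi ν with hμ
  set ξ : Ω → (Fin N ⊕ Fin (mm + 1)) → ℝ := fun ω s => f' s ω with hξ
  have hξmeas : Measurable ξ := measurable_pi_lambda _ hf'meas
  have hξinl : ∀ ω i, ξ ω (Sum.inl i) = W i ω := fun ω i => rfl
  have hξinr : ∀ ω l, ξ ω (Sum.inr l) = U l ω := fun ω l => rfl
  have hlaw : Measure.map ξ P = μ := sps_bundle_law P f' hf'meas hf'indep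
  have hμB : ∀ B : Set ((Fin N ⊕ Fin (mm + 1)) → ℝ), MeasurableSet B →
      P (ξ ⁻¹' B) = μ B := by
    intro B hB
    rw [← hlaw, Measure.map_apply hξmeas hB]
  -- invariance of μ under the swap transformations
  have hinv : ∀ (ε : Fin mm → Fin N → Bool) (k : Fin mm) (r : ℕ),
      μ (spsR φ ε 0 r) = μ (spsR φ (spsEpsT ε k) (Fin.succ k) r) := by
    intro ε k r
    have hmap : μ.map (fun x s => spsG ε k s (x (spsPerm k s))) = μ := by
      rw [hμ]
      refine sps_pi_map ν ν (spsPerm k) (spsG ε k) (spsG_measurable ε k) ?_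
      rintro (i | l)
      · have hp : spsPerm (N := N) k (Sum.inl i) = Sum.inl i := rfl
        rw [hp]
        have hνi : ν (Sum.inl i) = Measure.map (W i) P := rfl
        cases hb : ε k i
        · have hfun : spsG (N := N) ε k (Sum.inl i) = fun v : ℝ => -v := by
            funext v; simp [spsG, spsSg, hb]
          rw [hνi, hfun, Measure.map_map measurable_neg (hWmeas i)]
          have h2 : (fun v : ℝ => -v) ∘ W i = fun ω => -W i ω := rfl
          rw [h2, ← hWsym i]
        · have hfun : spsG (N := N) ε k (Sum.inl i) = fun v : ℝ => v := by
            funext v; simp [spsG, spsSg, hb]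
          rw [hνi, hfun]
          exact Measure.map_id'
      · have hp : spsPerm (N := N) k (Sum.inr l) = Sum.inr (Equiv.swap 0 k.succ l) := rfl
        have hfun : spsG (N := N) ε k (Sum.inr l) = fun v : ℝ => v := rfl
        rw [hp, hfun]
        have h1 : ν (Sum.inr (Equiv.swap 0 k.succ l))
            = Measure.map (U (Equiv.swap 0 k.succ l)) P := rfl
        have h2 : ν (Sum.inr l) = Measure.map (U l) P := rfl
        rw [h1, h2, Measure.map_id']
        exact (hUid _ _).map_eq
    have hΨmeas : Measurable (fun x : (Fin N ⊕ Fin (mm + 1)) → ℝ =>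
        fun s => spsG ε k s (x (spsPerm k s))) :=
      measurable_pi_lambda _ fun s => (spsG_measurable ε k s).comp (measurable_pi_apply _)
    calc μ (spsR φ ε 0 r)
        = μ ((fun x (s : Fin N ⊕ Fin (mm + 1)) => spsG ε k s (x (spsPerm k s))) ⁻¹'
            spsR φ (spsEpsT ε k) (Fin.succ k) r) := by rw [spsR_preimage]
      _ = (μ.map (fun x s => spsG ε k s (x (spsPerm k s))))
            (spsR φ (spsEpsT ε k) (Fin.succ k) r) :=
          (Measure.map_apply hΨmeas (spsR_measurable _ _ _ _)).symm
      _ = μ (spsR φ (spsEpsT ε k) (Fin.succ k) r) := by rw [hmap]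
  -- the sign-configuration events
  set Aset : (Fin mm → Fin N → Bool) → Set Ω :=
    fun ε => {ω | ∀ k i, A k i ω = spsSg (ε k i)} with hAset
  set η : Ω → (Fin mm × Fin N) → ℝ := fun ω p => A p.1 p.2 ω with hη
  have hηmeas : Measurable η := measurable_pi_lambda _ fun p => (hA p.1 p.2).1
  have hAsetEq : ∀ ε, Aset ε = η ⁻¹' (Set.pi Set.univ fun p => {spsSg (ε p.1 p.2)}) := by
    intro ε
    ext ω
    simp only [hAset, Set.mem_setOf_eq, Set.mem_preimage, Set.mem_pi, Set.mem_univ,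
      Set.mem_singleton_iff, true_implies, Prod.forall, hη]
  have hAmeas : ∀ ε, MeasurableSet (Aset ε) := by
    intro ε
    rw [hAsetEq ε]
    exact hηmeas (MeasurableSet.univ_pi fun p => measurableSet_singleton _)
  have hAsign : ∀ (k : Fin mm) (i : Fin N) (b : Bool),
      P ((fun ω => A k i ω) ⁻¹' {spsSg b}) = 1 / 2 := by
    intro k i b
    have h1 : (fun ω => A k i ω) ⁻¹' {spsSg b} = {ω | A k i ω = spsSg b} := by
      ext ω; simp
    rw [h1]
    cases b
    · simpa [spsSg] using (hA k i).2.2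
    · simpa [spsSg] using (hA k i).2.1
  have hAprob : ∀ ε, P (Aset ε) = ∏ _p : Fin mm × Fin N, (1 / 2 : ℝ≥0∞) := by
    intro ε
    have hAindep : iIndepFun
        (fun p : Fin mm × Fin N => A p.1 p.2) P := by
      have hinj : Function.Injective
          (fun p : Fin mm × Fin N => (Sum.inr (Sum.inl p) :
            Fin N ⊕ ((Fin mm × Fin N) ⊕ Fin (mm + 1)))) := by
        intro a b h; simpa using h
      exact sps_iIndepFun_reindex P _ hinj _ hindep
    have h1 : Aset ε = ⋂ p ∈ Finset.univ,
        (fun ω => A (p : Fin mm × Fin N).1 p.2 ω) ⁻¹' {spsSg (ε p.1 p.2)} := by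
      ext ω
      simp only [hAset, Set.mem_setOf_eq, Set.mem_iInter, Finset.mem_univ, Set.mem_preimage,
        Set.mem_singleton_iff, true_implies, Prod.forall]
    rw [h1, hAindep.measure_inter_preimage_eq_mul Finset.univ
      (fun p _ => measurableSet_singleton _)]
    exact Finset.prod_congr rfl fun p _ => hAsign p.1 p.2 _
  have hAdisj : Pairwise (Function.onFun Disjoint Aset) := by
    intro ε ε' hne
    rw [Function.onFun, Set.disjoint_left]
    intro ω hω hω'
    have hex : ∃ k i, ε k i ≠ ε' k i := by
      by_contra hcon
      push_neg at hcon
      exact hne (funext fun k => funext fun i => hcon k i)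
    obtain ⟨k, i, hki⟩ := hex
    have h3 : spsSg (ε k i) = spsSg (ε' k i) := (hω k i).symm.trans (hω' k i)
    exact hki (spsSg_inj h3)
  have hAcover : P ((⋃ ε, Aset ε)ᶜ) = 0 := by
    have hsub : (⋃ ε, Aset ε)ᶜ ⊆
        ⋃ (k : Fin mm) (i : Fin N), {ω | A k i ω ≠ 1 ∧ A k i ω ≠ -1} := by
      intro ω hω
      simp only [Set.mem_compl_iff, Set.mem_iUnion] at hω ⊢
      by_contra hcon
      push_neg at hcon
      simp only [Set.mem_setOf_eq, not_and, not_not] at hcon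
      apply hω
      refine ⟨fun k i => decide (A k i ω = 1), fun k i => ?_⟩
      show A k i ω = spsSg (decide (A k i ω = 1))
      by_cases h1 : A k i ω = 1
      · rw [decide_eq_true h1, h1]
        norm_num [spsSg]
      · rw [decide_eq_false h1, hcon k i h1]
        norm_num [spsSg]
    refine measure_mono_null hsub (measure_iUnion_null fun k => measure_iUnion_null fun i => ?_)
    have hmeas1 : MeasurableSet {ω | A k i ω = 1} := by
      have h := (hA k i).1 (measurableSet_singleton (1 : ℝ))
      convert h using 1
      ext ω; simp
    have hmeas2 : MeasurableSet {ω | A k i ω = -1} := by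
      have h := (hA k i).1 (measurableSet_singleton (-1 : ℝ))
      convert h using 1
      ext ω; simp
    have hu : P ({ω | A k i ω = 1} ∪ {ω | A k i ω = -1}) = 1 := by
      rw [measure_union (by
        rw [Set.disjoint_left]
        intro ω h1 h2
        simp only [Set.mem_setOf_eq] at h1 h2
        rw [h1] at h2
        norm_num at h2) hmeas2]
      rw [(hA k i).2.1, (hA k i).2.2]
      rw [show (1 : ℝ≥0∞) / 2 = 2⁻¹ by rw [one_div]]
      exact ENNReal.inv_two_add_inv_two
    have hcompl : {ω | A k i ω ≠ 1 ∧ A k i ω ≠ -1}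
        = ({ω | A k i ω = 1} ∪ {ω | A k i ω = -1})ᶜ := by
      ext ω
      simp [not_or]
    rw [hcompl, measure_compl (hmeas1.union hmeas2) (measure_ne_top _ _), hu]
    simp
  have hdecomp : ∀ F : Set Ω, MeasurableSet F →
      P F = ∑ ε : Fin mm → Fin N → Bool, P (F ∩ Aset ε) := by
    intro F hF
    have h1 : P F = P (F ∩ ⋃ ε, Aset ε) := by
      refine le_antisymm ?_ (measure_mono Set.inter_subset_left)
      calc P F ≤ P ((F ∩ ⋃ ε, Aset ε) ∪ (⋃ ε, Aset ε)ᶜ) := measure_mono (by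
            intro ω hω
            by_cases h : ω ∈ ⋃ ε, Aset ε
            exacts [Or.inl ⟨hω, h⟩, Or.inr h])
        _ ≤ P (F ∩ ⋃ ε, Aset ε) + P ((⋃ ε, Aset ε)ᶜ) := measure_union_le _ _
        _ = P (F ∩ ⋃ ε, Aset ε) := by rw [hAcover, add_zero]
    rw [h1, Set.inter_iUnion, measure_iUnion
      (fun ε ε' hne => (hAdisj hne).mono Set.inter_subset_right Set.inter_subset_right)
      (fun ε => hF.inter (hAmeas ε))]
    exact tsum_fintype _
  -- independence of ξ-events and the sign-configuration events
  have hindep2 : ∀ (B : Set ((Fin N ⊕ Fin (mm + 1)) → ℝ)), MeasurableSet B → ∀ ε,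
      P (ξ ⁻¹' B ∩ Aset ε) = P (ξ ⁻¹' B) * P (Aset ε) := by
    intro B hB ε
    set ST : Finset (Fin N ⊕ ((Fin mm × Fin N) ⊕ Fin (mm + 1))) :=
      Finset.univ.image (Sum.map id Sum.inr : Fin N ⊕ Fin (mm + 1) → _) with hST
    set SA : Finset (Fin N ⊕ ((Fin mm × Fin N) ⊕ Fin (mm + 1))) :=
      Finset.univ.image (fun p : Fin mm × Fin N => Sum.inr (Sum.inl p)) with hSA
    have hdisj : Disjoint ST SA := by
      rw [Finset.disjoint_left]
      intro s hs hs'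
      simp only [hST, hSA, Finset.mem_image, Finset.mem_univ, true_and] at hs hs'
      obtain ⟨t, rfl⟩ := hs
      obtain ⟨p, hp⟩ := hs'
      cases t <;> simp_all
    have hIF := hindep.indepFun_finset ST SA hdisj hbigf_meas
    set gT : ({s // s ∈ ST} → ℝ) → (Fin N ⊕ Fin (mm + 1)) → ℝ :=
      fun y s => y ⟨Sum.map id Sum.inr s, Finset.mem_image_of_mem _ (Finset.mem_univ s)⟩ with hgT
    set gA : ({s // s ∈ SA} → ℝ) → (Fin mm × Fin N) → ℝ :=
      fun y p => y ⟨Sum.inr (Sum.inl p), Finset.mem_image_of_mem _ (Finset.mem_univ p)⟩ with hgA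
    have hgTmeas : Measurable gT := measurable_pi_lambda _ fun s => measurable_pi_apply _
    have hgAmeas : Measurable gA := measurable_pi_lambda _ fun p => measurable_pi_apply _
    have hcomp := hIF.comp hgTmeas hgAmeas
    have heT : gT ∘ (fun a (i : {s // s ∈ ST}) =>
        (Sum.elim W (Sum.elim (fun p : Fin mm × Fin N => A p.1 p.2) U) :
          Fin N ⊕ ((Fin mm × Fin N) ⊕ Fin (mm + 1)) → Ω → ℝ) i a) = ξ := by
      funext ω s
      cases s <;> rfl
    have heA : gA ∘ (fun a (i : {s // s ∈ SA}) =>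
        (Sum.elim W (Sum.elim (fun p : Fin mm × Fin N => A p.1 p.2) U) :
          Fin N ⊕ ((Fin mm × Fin N) ⊕ Fin (mm + 1)) → Ω → ℝ) i a) = η := by
      funext ω p
      rfl
    rw [heT, heA] at hcomp
    rw [hAsetEq ε]
    exact indepFun_iff_measure_inter_preimage_eq_mul.mp hcomp B _ hB
      (MeasurableSet.univ_pi fun p => measurableSet_singleton _)
  -- bridging: on `Aset ε` the statistics agree with the value-space statistics
  have hYW : ∀ i ω, Y i ω - (inner ℝ (φ i) p₀ : ℝ) = W i ω := by
    intro i ω; rw [hY]; ring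
  have hbridge : ∀ (ε : Fin mm → Fin N → Bool) (ω : Ω), ω ∈ Aset ε →
      ∀ l, spsZ φ Y A p₀ l ω = spsZv φ ε (ξ ω) l := by
    intro ε ω hω l
    induction l using Fin.cases with
    | zero =>
        rw [spsZ_zero, spsZv_zero]
        exact congrArg (· ^ 2) (congrArg norm (Finset.sum_congr rfl fun i _ => by
          rw [hYW, hξinl]))
    | succ k =>
        rw [spsZ_succ, spsZv_succ]
        exact congrArg (· ^ 2) (congrArg norm (Finset.sum_congr rfl fun i _ => by
          rw [hYW, hξinl, hω k i]))
  -- the rank events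
  have hEv_inter : ∀ (j : Fin (mm + 1)) (r : ℕ) (ε : Fin mm → Fin N → Bool),
      {ω | Set.ncard {l : Fin (mm + 1) |
          (toLex (spsZ φ Y A p₀ l ω, U l ω) : ℝ ×ₗ ℝ)
            < toLex (spsZ φ Y A p₀ j ω, U j ω)} = r} ∩ Aset ε
        = ξ ⁻¹' spsR φ ε j r ∩ Aset ε := by
    intro j r ε
    ext ω
    simp only [Set.mem_inter_iff, and_congr_left_iff]
    intro hω
    have hset : {l : Fin (mm + 1) |
        (toLex (spsZ φ Y A p₀ l ω, U l ω) : ℝ ×ₗ ℝ)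
          < toLex (spsZ φ Y A p₀ j ω, U j ω)}
        = {l | spsSv φ ε (ξ ω) l < spsSv φ ε (ξ ω) j} := by
      ext l
      simp only [Set.mem_setOf_eq, spsSv_eq, hbridge ε ω hω, hξinr]
    simp only [Set.mem_setOf_eq, Set.mem_preimage, spsR, hset]
  -- measurability of the statistics and events
  have hYmeas : ∀ i, Measurable (Y i) := by
    intro i
    have : Y i = fun ω => (inner ℝ (φ i) p₀ : ℝ) + W i ω := funext (hY i)
    rw [this]
    exact measurable_const.add (hWmeas i)
  have hZmeas : ∀ l, Measurable (fun ω => spsZ φ Y A p₀ l ω) := by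
    intro l
    induction l using Fin.cases with
    | zero =>
        have h : (fun ω => spsZ φ Y A p₀ 0 ω)
            = fun ω => ‖∑ i, (Y i ω - (inner ℝ (φ i) p₀ : ℝ)) • φ i‖ ^ 2 :=
          funext fun ω => spsZ_zero φ Y A p₀ ω
        rw [h]
        exact ((Finset.measurable_sum _ fun i _ =>
          ((hYmeas i).sub measurable_const).smul_const (φ i)).norm).pow_const 2
    | succ k =>
        have h : (fun ω => spsZ φ Y A p₀ k.succ ω)
            = fun ω => ‖∑ i, (A k i ω * (Y i ω - (inner ℝ (φ i) p₀ : ℝ))) • φ i‖ ^ 2 :=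
          funext fun ω => spsZ_succ φ Y A p₀ k ω
        rw [h]
        exact ((Finset.measurable_sum _ fun i _ =>
          (((hA k i).1.mul ((hYmeas i).sub measurable_const)).smul_const (φ i))).norm).pow_const 2
  have hEvMeas : ∀ (j : Fin (mm + 1)) (r : ℕ), MeasurableSet
      {ω | Set.ncard {l : Fin (mm + 1) |
          (toLex (spsZ φ Y A p₀ l ω, U l ω) : ℝ ×ₗ ℝ)
            < toLex (spsZ φ Y A p₀ j ω, U j ω)} = r} := by
    intro j r
    have h1 : {ω | Set.ncard {l : Fin (mm + 1) |
          (toLex (spsZ φ Y A p₀ l ω, U l ω) : ℝ ×ₗ ℝ)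
            < toLex (spsZ φ Y A p₀ j ω, U j ω)} = r}
        = {ω | (Finset.univ.filter fun l : Fin (mm + 1) =>
            (toLex (spsZ φ Y A p₀ l ω, U l ω) : ℝ ×ₗ ℝ)
              < toLex (spsZ φ Y A p₀ j ω, U j ω)).card = r} := by
      ext ω
      simp only [Set.mem_setOf_eq, sps_ncard_eq_filter]
    rw [h1]
    refine sps_measurableSet_card_filter _ (fun l => ?_) r
    have h2 : {ω | (toLex (spsZ φ Y A p₀ l ω, U l ω) : ℝ ×ₗ ℝ)
          < toLex (spsZ φ Y A p₀ j ω, U j ω)}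
        = {ω | spsZ φ Y A p₀ l ω < spsZ φ Y A p₀ j ω}
          ∪ ({ω | spsZ φ Y A p₀ l ω = spsZ φ Y A p₀ j ω} ∩ {ω | U l ω < U j ω}) := by
      ext ω
      simp only [Set.mem_setOf_eq, Set.mem_union, Set.mem_inter_iff, Prod.Lex.lt_iff, ofLex_toLex]
    rw [h2]
    exact MeasurableSet.union (measurableSet_lt (hZmeas l) (hZmeas j))
      (MeasurableSet.inter (measurableSet_eq_fun (hZmeas l) (hZmeas j))
        (measurableSet_lt (hUmeas l) (hUmeas j)))
  -- decomposition of the rank events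
  have hP1 : ∀ (j : Fin (mm + 1)) (r : ℕ),
      P {ω | Set.ncard {l : Fin (mm + 1) |
          (toLex (spsZ φ Y A p₀ l ω, U l ω) : ℝ ×ₗ ℝ)
            < toLex (spsZ φ Y A p₀ j ω, U j ω)} = r}
        = ∑ ε : Fin mm → Fin N → Bool, μ (spsR φ ε j r) * P (Aset ε) := by
    intro j r
    rw [hdecomp _ (hEvMeas j r)]
    refine Finset.sum_congr rfl fun ε _ => ?_
    rw [hEv_inter j r ε, hindep2 _ (spsR_measurable φ ε j r) ε, hμB _ (spsR_measurable φ ε j r)]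
  -- the swap argument
  have hswap : ∀ (k : Fin mm) (r : ℕ),
      P {ω | Set.ncard {l : Fin (mm + 1) |
          (toLex (spsZ φ Y A p₀ l ω, U l ω) : ℝ ×ₗ ℝ)
            < toLex (spsZ φ Y A p₀ (Fin.succ k) ω, U (Fin.succ k) ω)} = r}
        = P {ω | Set.ncard {l : Fin (mm + 1) |
          (toLex (spsZ φ Y A p₀ l ω, U l ω) : ℝ ×ₗ ℝ)
            < toLex (spsZ φ Y A p₀ 0 ω, U 0 ω)} = r} := by
    intro k r
    rw [hP1, hP1]
    have hinvol : Function.Involutive (fun ε : Fin mm → Fin N → Bool => spsEpsT ε k) :=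
      fun ε => spsEpsT_invol ε k
    have hre := Equiv.sum_comp hinvol.toPerm
      (fun ε : Fin mm → Fin N → Bool => μ (spsR φ ε (Fin.succ k) r) * P (Aset ε))
    simp only [Function.Involutive.coe_toPerm] at hre
    rw [← hre]
    refine Finset.sum_congr rfl fun ε _ => ?_
    rw [← hinv ε k r, hAprob, hAprob]
  have hall : ∀ (j : Fin (mm + 1)) (r : ℕ),
      P {ω | Set.ncard {l : Fin (mm + 1) |
          (toLex (spsZ φ Y A p₀ l ω, U l ω) : ℝ ×ₗ ℝ)
            < toLex (spsZ φ Y A p₀ j ω, U j ω)} = r}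
        = P {ω | Set.ncard {l : Fin (mm + 1) |
          (toLex (spsZ φ Y A p₀ l ω, U l ω) : ℝ ×ₗ ℝ)
            < toLex (spsZ φ Y A p₀ 0 ω, U 0 ω)} = r} := by
    intro j r
    induction j using Fin.cases with
    | zero => rfl
    | succ k => exact hswap k r
  -- almost-sure distinctness of the tie-breakers
  have hUne : ∀ l l' : Fin (mm + 1), l ≠ l' → P {ω | U l ω = U l' ω} = 0 := by
    intro l l' hne
    have hind : IndepFun (U l) (U l') P := by
      have h := hindep.indepFun
        (show (Sum.inr (Sum.inr l) : Fin N ⊕ ((Fin mm × Fin N) ⊕ Fin (mm + 1)))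
          ≠ Sum.inr (Sum.inr l') by simp [hne])
      exact h
    have hmap : P.map (fun ω => (U l ω, U l' ω)) = (P.map (U l)).prod (P.map (U l')) :=
      (indepFun_iff_map_prod_eq_prod_map_map (hUmeas l).aemeasurable
        (hUmeas l').aemeasurable).mp hind
    have hdiagmeas : MeasurableSet {p : ℝ × ℝ | p.1 = p.2} :=
      measurableSet_eq_fun measurable_fst measurable_snd
    have hset : {ω | U l ω = U l' ω}
        = (fun ω => (U l ω, U l' ω)) ⁻¹' {p : ℝ × ℝ | p.1 = p.2} := rfl
    rw [hset, ← Measure.map_apply ((hUmeas l).prodMk (hUmeas l')) hdiagmeas, hmap,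
      Measure.prod_apply hdiagmeas]
    have hzero : ∀ x : ℝ, (P.map (U l')) (Prod.mk x ⁻¹' {p : ℝ × ℝ | p.1 = p.2}) = 0 := by
      intro x
      have hpre : (Prod.mk x ⁻¹' {p : ℝ × ℝ | p.1 = p.2}) = {x} := by
        ext y; simp [eq_comm]
      rw [hpre, Measure.map_apply (hUmeas l') (measurableSet_singleton x)]
      have h1 : U l' ⁻¹' {x} = {ω | U l' ω = x} := by ext; simp
      rw [h1]
      exact hUcont l' x
    simp only [hzero]
    exact lintegral_zero
  set D : Set Ω := {ω | ∀ l l' : Fin (mm + 1), l ≠ l' → U l ω ≠ U l' ω} with hDdef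
  have hDmeas : MeasurableSet D := by
    have h1 : D = ⋂ (l : Fin (mm + 1)) (l' : Fin (mm + 1)) (_ : l ≠ l'),
        {ω | U l ω = U l' ω}ᶜ := by
      ext ω
      simp only [hDdef, Set.mem_setOf_eq, Set.mem_iInter, Set.mem_compl_iff]
    rw [h1]
    exact MeasurableSet.iInter fun l => MeasurableSet.iInter fun l' =>
      MeasurableSet.iInter fun _ => (measurableSet_eq_fun (hUmeas l) (hUmeas l')).compl
  have hDc : P Dᶜ = 0 := by
    have hsub : Dᶜ ⊆ ⋃ (l : Fin (mm + 1)) (l' : Fin (mm + 1)) (_ : l ≠ l'),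
        {ω | U l ω = U l' ω} := by
      intro ω hω
      simp only [hDdef, Set.mem_compl_iff, Set.mem_setOf_eq] at hω
      push_neg at hω
      obtain ⟨l, l', hne, heq⟩ := hω
      exact Set.mem_iUnion.mpr ⟨l, Set.mem_iUnion.mpr ⟨l', Set.mem_iUnion.mpr ⟨hne, heq⟩⟩⟩
    exact measure_mono_null hsub (measure_iUnion_null fun l => measure_iUnion_null fun l' =>
      measure_iUnion_null fun hne => hUne l l' hne)
  have hPD : P D = 1 := by
    have h2 := measure_add_measure_compl (μ := P) hDmeas
    rw [hDc, add_zero] at h2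
    rw [h2]
    exact measure_univ
  have hinterD : ∀ F : Set Ω, P F = P (F ∩ D) := by
    intro F
    refine le_antisymm ?_ (measure_mono Set.inter_subset_left)
    calc P F ≤ P ((F ∩ D) ∪ Dᶜ) := measure_mono (by
          intro ω hω
          by_cases h : ω ∈ D
          exacts [Or.inl ⟨hω, h⟩, Or.inr h])
      _ ≤ P (F ∩ D) + P Dᶜ := measure_union_le _ _
      _ = P (F ∩ D) := by rw [hDc, add_zero]
  have hSinj : ∀ ω, ω ∈ D → Function.Injective
      (fun l => (toLex (spsZ φ Y A p₀ l ω, U l ω) : ℝ ×ₗ ℝ)) := by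
    intro ω hω l l' h
    by_contra hne
    refine hω l l' hne ?_
    exact congrArg (fun z : ℝ ×ₗ ℝ => (ofLex z).2) h
  have hExu : ∀ ω, ω ∈ D → ∀ r : ℕ, r < mm + 1 → ∃! j : Fin (mm + 1),
      Set.ncard {l : Fin (mm + 1) |
          (toLex (spsZ φ Y A p₀ l ω, U l ω) : ℝ ×ₗ ℝ)
            < toLex (spsZ φ Y A p₀ j ω, U j ω)} = r := by
    intro ω hω r hr
    have h := sps_rank_existsUnique
      (fun l => (toLex (spsZ φ Y A p₀ l ω, U l ω) : ℝ ×ₗ ℝ)) (hSinj ω hω) r hr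
    obtain ⟨j, hj, hju⟩ := h
    refine ⟨j, ?_, fun y hy => hju y ?_⟩
    · show Set.ncard {l : Fin (mm + 1) |
          (toLex (spsZ φ Y A p₀ l ω, U l ω) : ℝ ×ₗ ℝ)
            < toLex (spsZ φ Y A p₀ j ω, U j ω)} = r
      rw [sps_ncard_eq_filter]
      exact hj
    · have hy' : Set.ncard {l : Fin (mm + 1) |
          (toLex (spsZ φ Y A p₀ l ω, U l ω) : ℝ ×ₗ ℝ)
            < toLex (spsZ φ Y A p₀ y ω, U y ω)} = r := hy
      rw [sps_ncard_eq_filter] at hy'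
      exact hy'
  have hsum1 : ∀ r : ℕ, r < mm + 1 →
      ∑ j : Fin (mm + 1), P {ω | Set.ncard {l : Fin (mm + 1) |
          (toLex (spsZ φ Y A p₀ l ω, U l ω) : ℝ ×ₗ ℝ)
            < toLex (spsZ φ Y A p₀ j ω, U j ω)} = r} = 1 := by
    intro r hr
    have hdisjD : Pairwise (Function.onFun Disjoint fun j : Fin (mm + 1) =>
        {ω | Set.ncard {l : Fin (mm + 1) |
          (toLex (spsZ φ Y A p₀ l ω, U l ω) : ℝ ×ₗ ℝ)
            < toLex (spsZ φ Y A p₀ j ω, U j ω)} = r} ∩ D) := by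
      intro j j' hne
      rw [Function.onFun, Set.disjoint_left]
      intro ω h1 h2
      exact hne ((hExu ω h1.2 r hr).unique h1.1 h2.1)
    calc ∑ j : Fin (mm + 1), P {ω | Set.ncard {l : Fin (mm + 1) |
          (toLex (spsZ φ Y A p₀ l ω, U l ω) : ℝ ×ₗ ℝ)
            < toLex (spsZ φ Y A p₀ j ω, U j ω)} = r}
        = ∑ j : Fin (mm + 1), P ({ω | Set.ncard {l : Fin (mm + 1) |
            (toLex (spsZ φ Y A p₀ l ω, U l ω) : ℝ ×ₗ ℝ)
              < toLex (spsZ φ Y A p₀ j ω, U j ω)} = r} ∩ D) :=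
          Finset.sum_congr rfl fun j _ => hinterD _
      _ = P (⋃ j : Fin (mm + 1), {ω | Set.ncard {l : Fin (mm + 1) |
            (toLex (spsZ φ Y A p₀ l ω, U l ω) : ℝ ×ₗ ℝ)
              < toLex (spsZ φ Y A p₀ j ω, U j ω)} = r} ∩ D) := by
          rw [measure_iUnion hdisjD (fun j => (hEvMeas j r).inter hDmeas), tsum_fintype]
      _ = P D := by
          congr 1
          refine subset_antisymm (Set.iUnion_subset fun j => Set.inter_subset_right) ?_
          intro ω hω
          obtain ⟨j, hj, _⟩ := hExu ω hω r hr
          exact Set.mem_iUnion.mpr ⟨j, hj, hω⟩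
      _ = 1 := hPD
  have hval : ∀ (j : Fin (mm + 1)) (r : ℕ), r < mm + 1 →
      P {ω | Set.ncard {l : Fin (mm + 1) |
          (toLex (spsZ φ Y A p₀ l ω, U l ω) : ℝ ×ₗ ℝ)
            < toLex (spsZ φ Y A p₀ j ω, U j ω)} = r}
        = ((mm + 1 : ℕ) : ℝ≥0∞)⁻¹ := by
    intro j r hr
    rw [hall j r]
    have h1 := hsum1 r hr
    rw [Finset.sum_congr rfl (fun j' _ => hall j' r), Finset.sum_const, Finset.card_univ,
      Fintype.card_fin, nsmul_eq_mul] at h1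
    have hne0 : ((mm + 1 : ℕ) : ℝ≥0∞) ≠ 0 := by
      exact_mod_cast Nat.succ_ne_zero mm
    have hnet : ((mm + 1 : ℕ) : ℝ≥0∞) ≠ ⊤ := ENNReal.natCast_ne_top _
    calc P {ω | Set.ncard {l : Fin (mm + 1) |
          (toLex (spsZ φ Y A p₀ l ω, U l ω) : ℝ ×ₗ ℝ)
            < toLex (spsZ φ Y A p₀ 0 ω, U 0 ω)} = r}
        = (((mm + 1 : ℕ) : ℝ≥0∞)⁻¹ * ((mm + 1 : ℕ) : ℝ≥0∞))
            * P {ω | Set.ncard {l : Fin (mm + 1) |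
          (toLex (spsZ φ Y A p₀ l ω, U l ω) : ℝ ×ₗ ℝ)
            < toLex (spsZ φ Y A p₀ 0 ω, U 0 ω)} = r} := by
          rw [ENNReal.inv_mul_cancel hne0 hnet, one_mul]
      _ = ((mm + 1 : ℕ) : ℝ≥0∞)⁻¹ := by
          rw [mul_assoc, h1, mul_one]
  refine ⟨fun j r hr => hval j r hr, ?_⟩
  -- Part 2
  have hEv2eq : {ω | q ≤ Set.ncard {j : Fin mm |
        (toLex (spsZ φ Y A p₀ 0 ω, U 0 ω) : ℝ ×ₗ ℝ)
          < toLex (spsZ φ Y A p₀ j.succ ω, U j.succ ω)}} ∩ D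
      = (⋃ r ∈ Finset.range (mm + 1 - q), {ω | Set.ncard {l : Fin (mm + 1) |
          (toLex (spsZ φ Y A p₀ l ω, U l ω) : ℝ ×ₗ ℝ)
            < toLex (spsZ φ Y A p₀ 0 ω, U 0 ω)} = r}) ∩ D := by
    ext ω
    simp only [Set.mem_inter_iff, Set.mem_setOf_eq, Set.mem_iUnion, exists_prop,
      and_congr_left_iff]
    intro hω
    exact sps_part2_count (fun l => (toLex (spsZ φ Y A p₀ l ω, U l ω) : ℝ ×ₗ ℝ))
      (hSinj ω hω) q hqm
  have hdisjR : Set.PairwiseDisjoint (↑(Finset.range (mm + 1 - q)))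
      (fun r : ℕ => {ω | Set.ncard {l : Fin (mm + 1) |
          (toLex (spsZ φ Y A p₀ l ω, U l ω) : ℝ ×ₗ ℝ)
            < toLex (spsZ φ Y A p₀ 0 ω, U 0 ω)} = r}) := by
    intro r _ r' _ hne
    rw [Function.onFun, Set.disjoint_left]
    intro ω h1 h2
    exact hne (h1.symm.trans h2)
  calc P {ω | q ≤ Set.ncard {j : Fin mm |
        (toLex (spsZ φ Y A p₀ 0 ω, U 0 ω) : ℝ ×ₗ ℝ)
          < toLex (spsZ φ Y A p₀ j.succ ω, U j.succ ω)}}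
      = P ({ω | q ≤ Set.ncard {j : Fin mm |
          (toLex (spsZ φ Y A p₀ 0 ω, U 0 ω) : ℝ ×ₗ ℝ)
            < toLex (spsZ φ Y A p₀ j.succ ω, U j.succ ω)}} ∩ D) := hinterD _
    _ = P ((⋃ r ∈ Finset.range (mm + 1 - q), {ω | Set.ncard {l : Fin (mm + 1) |
          (toLex (spsZ φ Y A p₀ l ω, U l ω) : ℝ ×ₗ ℝ)
            < toLex (spsZ φ Y A p₀ 0 ω, U 0 ω)} = r}) ∩ D) := by rw [hEv2eq]
    _ = P (⋃ r ∈ Finset.range (mm + 1 - q), {ω | Set.ncard {l : Fin (mm + 1) |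
          (toLex (spsZ φ Y A p₀ l ω, U l ω) : ℝ ×ₗ ℝ)
            < toLex (spsZ φ Y A p₀ 0 ω, U 0 ω)} = r}) := (hinterD _).symm
    _ = ∑ r ∈ Finset.range (mm + 1 - q), P {ω | Set.ncard {l : Fin (mm + 1) |
          (toLex (spsZ φ Y A p₀ l ω, U l ω) : ℝ ×ₗ ℝ)
            < toLex (spsZ φ Y A p₀ 0 ω, U 0 ω)} = r} :=
        measure_biUnion_finset hdisjR (fun r _ => hEvMeas 0 r)
    _ = ∑ r ∈ Finset.range (mm + 1 - q), ((mm + 1 : ℕ) : ℝ≥0∞)⁻¹ :=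
        Finset.sum_congr rfl fun r hrm =>
          hval 0 r (by have := Finset.mem_range.mp hrm; omega)
    _ = ((mm + 1 - q : ℕ) : ℝ≥0∞) * ((mm + 1 : ℕ) : ℝ≥0∞)⁻¹ := by
        rw [Finset.sum_const, Finset.card_range, nsmul_eq_mul]
    _ = 1 - (q : ℝ≥0∞) / ((mm + 1 : ℕ) : ℝ≥0∞) := by
        have hne0 : ((mm + 1 : ℕ) : ℝ≥0∞) ≠ 0 := by exact_mod_cast Nat.succ_ne_zero mm
        have hnet : ((mm + 1 : ℕ) : ℝ≥0∞) ≠ ⊤ := ENNReal.natCast_ne_top _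
        have hqt : (q : ℝ≥0∞) / ((mm + 1 : ℕ) : ℝ≥0∞) ≠ ⊤ := by
          exact (ENNReal.div_lt_top (ENNReal.natCast_ne_top q) hne0).ne
        rw [← div_eq_mul_inv]
        refine ENNReal.eq_sub_of_add_eq hqt ?_
        rw [ENNReal.div_add_div_same, ← Nat.cast_add,
          show mm + 1 - q + q = mm + 1 by omega, ENNReal.div_self hne0 hnet]
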